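/- For any forest F on a finite vertex set Λ, the hyperbolic fermionic integral of the product over edges ij ∈ F of (u_i·u_j + 1) equals 1, where the integral of a form G is defined as (∏_i ∂_{η_i}∂_{ξ_i} (1+ξ_iη_i)) G (extracting the top coefficient). -/
import Mathlib


open ExteriorAlgebra

noncomputable section

/-- Coordinate module carrying the `2n` Grassmann generators. -/
abbrev GrM (n : ℕ) : Type := (Fin n × Bool) → ℝ

/-- The real Grassmann algebra with generators `(ξ i, η i)`. -/
abbrev Gr (n : ℕ) : Type := ExteriorAlgebra ℝ (GrM n)

/-- Generator `ξ i`. -/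
def gξ {n : ℕ} (i : Fin n) : Gr n := ι ℝ (Pi.single (i, false) (1 : ℝ))

/-- Generator `η i`. -/
def gη {n : ℕ} (i : Fin n) : Gr n := ι ℝ (Pi.single (i, true) (1 : ℝ))

/-- `z i = 1 - ξ i * η i`. -/
def gz {n : ℕ} (i : Fin n) : Gr n := 1 - gξ i * gη i

/-- `u i · u j = -ξ i η j - ξ j η i - z i z j`. -/
def udot {n : ℕ} (i j : Fin n) : Gr n := -(gξ i * gη j) - gξ j * gη i - gz i * gz j

/-- Grassmann (left) derivative `∂_{ξ i}`, i.e. left contraction. -/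
def dξ {n : ℕ} (i : Fin n) : Module.End ℝ (Gr n) :=
  CliffordAlgebra.contractLeft (Q := (0 : QuadraticForm ℝ (GrM n))) (LinearMap.proj (i, false))

/-- Grassmann (left) derivative `∂_{η i}`. -/
def dη {n : ℕ} (i : Fin n) : Module.End ℝ (Gr n) :=
  CliffordAlgebra.contractLeft (Q := (0 : QuadraticForm ℝ (GrM n))) (LinearMap.proj (i, true))

/-- The pair `∂_{η i} ∂_{ξ i}`. -/
def pairD {n : ℕ} (i : Fin n) : Module.End ℝ (Gr n) := dη i * dξ i

/-- `∏ i, ∂_{η i} ∂_{ξ i}`. -/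
def fullD {n : ℕ} : Module.End ℝ (Gr n) := (List.ofFn (fun i : Fin n => pairD i)).prod

/-- Plain Berezin integral: apply all derivatives, take the scalar (degree-0) part. -/
def bint {n : ℕ} (G : Gr n) : ℝ := algebraMapInv (fullD G)

/-- Hyperbolic fermionic integral `[G]_0 = ∏ᵢ ∂_{ηᵢ}∂_{ξᵢ} ((∏ᵢ (1+ξᵢηᵢ)) G)`,
using `1/zᵢ = 1 + ξᵢηᵢ`. -/
def sint {n : ℕ} (G : Gr n) : ℝ :=
  bint ((List.ofFn (fun i : Fin n => (1 : Gr n) + gξ i * gη i)).prod * G)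

/-- Exponential of a Grassmann element by its terminating power series:
for elements with vanishing degree-0 part, `x ^ (2n+1) = 0`, so the series below is exact. -/
def expG {n : ℕ} (x : Gr n) : Gr n :=
  ∑ k ∈ Finset.range (2 * n + 1), (k.factorial : ℝ)⁻¹ • x ^ k

open scoped Classical

/-- `F` is a forest: edges are recorded as ordered pairs with `p.1 < p.2` and the
induced simple graph is acyclic. -/
def ForestRep {n : ℕ} (F : Finset (Fin n × Fin n)) : Prop :=
  (∀ p ∈ F, p.1 < p.2) ∧ (SimpleGraph.fromRel (fun i j => (i, j) ∈ F)).IsAcyclic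

/-- Weight `∏_{ij ∈ F} β i j` of a forest. -/
def fwt {n : ℕ} (β : Fin n → Fin n → ℝ) (F : Finset (Fin n × Fin n)) : ℝ :=
  ∏ p ∈ F, β p.1 p.2

/-- `∏_{T tree of F} (1 + ∑_{i ∈ T} g i)`, product over connected components. -/
noncomputable def treeFactor {n : ℕ} (F : Finset (Fin n × Fin n)) (g : Fin n → ℝ) : ℝ :=
  ∏ c ∈ Finset.univ.image (SimpleGraph.fromRel (fun i j => (i, j) ∈ F)).connectedComponentMk,
    (1 + ∑ i ∈ Finset.univ.filter
        (fun i => (SimpleGraph.fromRel (fun i j => (i, j) ∈ F)).connectedComponentMk i = c), g i)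

namespace ForestProof

variable {n : ℕ}

/-- Generator of the Grassmann algebra. -/
def bg (m : Fin n × Bool) : Gr n := ι ℝ (Pi.single m (1 : ℝ))

lemma gξ_eq (i : Fin n) : gξ i = bg (i, false) := rfl
lemma gη_eq (i : Fin n) : gη i = bg (i, true) := rfl

/-- Contraction operator. -/
def dd (m : Fin n × Bool) : Module.End ℝ (Gr n) :=
  CliffordAlgebra.contractLeft (Q := (0 : QuadraticForm ℝ (GrM n))) (LinearMap.proj m)

lemma bg_sq (m : Fin n × Bool) : bg m * bg m = 0 := ι_sq_zero _

lemma bg_swap (x y : Fin n × Bool) : bg x * bg y = -(bg y * bg x) := by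
  have h := ι_sq_zero (R := ℝ) ((Pi.single x (1 : ℝ) + Pi.single y 1 : GrM n))
  rw [map_add, add_mul, mul_add, mul_add, ι_sq_zero, ι_sq_zero, zero_add, add_zero] at h
  exact eq_neg_of_add_eq_zero_left h

/-- The (even) subalgebra generated by products of two generators with indices in `S`. -/
def paired (S : Set (Fin n)) : Subalgebra ℝ (Gr n) :=
  Algebra.adjoin ℝ {x : Gr n | ∃ a c : Fin n × Bool, a.1 ∈ S ∧ c.1 ∈ S ∧ x = bg a * bg c}

lemma pair_mem {S : Set (Fin n)} {a c : Fin n × Bool} (ha : a.1 ∈ S) (hc : c.1 ∈ S) :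
    bg a * bg c ∈ paired S :=
  Algebra.subset_adjoin ⟨a, c, ha, hc, rfl⟩

lemma paired_mono {S T : Set (Fin n)} (h : S ⊆ T) : paired (n := n) S ≤ paired T :=
  Algebra.adjoin_mono (by rintro x ⟨a, c, ha, hc, rfl⟩; exact ⟨a, c, h ha, h hc, rfl⟩)

lemma bg_comm_paired {S : Set (Fin n)} (m : Fin n × Bool) {x : Gr n} (hx : x ∈ paired S) :
    bg m * x = x * bg m := by
  induction hx using Algebra.adjoin_induction with
  | mem x hx =>
    obtain ⟨a, c, -, -, rfl⟩ := hx
    rw [← mul_assoc, bg_swap m a, neg_mul, mul_assoc, bg_swap m c, mul_neg, neg_neg,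
      ← mul_assoc]
  | algebraMap r => exact (Algebra.commutes r (bg m)).symm
  | add x y hx hy ihx ihy => rw [mul_add, add_mul, ihx, ihy]
  | mul x y hx hy ihx ihy => rw [← mul_assoc, ihx, mul_assoc, ihy, ← mul_assoc]

lemma comm_paired {S T : Set (Fin n)} {x y : Gr n} (hx : x ∈ paired S) (hy : y ∈ paired T) :
    x * y = y * x := by
  induction hy using Algebra.adjoin_induction with
  | mem y hy =>
    obtain ⟨a, c, -, -, rfl⟩ := hy
    rw [← mul_assoc, ← bg_comm_paired a hx, mul_assoc, ← bg_comm_paired c hx, ← mul_assoc]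
  | algebraMap r => exact (Algebra.commutes r x).symm
  | add y z hy hz ihy ihz => rw [mul_add, add_mul, ihy, ihz]
  | mul y z hy hz ihy ihz => rw [← mul_assoc, ihy, mul_assoc, ihz, ← mul_assoc]

lemma dd_bg (m m' : Fin n × Bool) (w : Gr n) :
    dd m (bg m' * w) = ((Pi.single m' (1 : ℝ) : GrM n) m) • w - bg m' * dd m w :=
  CliffordAlgebra.contractLeft_ι_mul _ _ _

lemma dd_bg_same (m : Fin n × Bool) (w : Gr n) :
    dd m (bg m * w) = w - bg m * dd m w := by
  rw [dd_bg, Pi.single_eq_same, one_smul]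

lemma dd_bg_ne {m m' : Fin n × Bool} (h : m ≠ m') (w : Gr n) :
    dd m (bg m' * w) = -(bg m' * dd m w) := by
  rw [dd_bg, Pi.single_eq_of_ne h, zero_smul, zero_sub]

lemma dd_mul_paired {S : Set (Fin n)} {m : Fin n × Bool} (hm : m.1 ∉ S) {x : Gr n}
    (hx : x ∈ paired S) : ∀ y : Gr n, dd m (x * y) = x * dd m y := by
  induction hx using Algebra.adjoin_induction with
  | mem x hx =>
    obtain ⟨a, c, ha, hc, rfl⟩ := hx
    intro y
    have ham : m ≠ a := fun h => hm (h ▸ ha)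
    have hcm : m ≠ c := fun h => hm (h ▸ hc)
    rw [mul_assoc, dd_bg_ne ham, dd_bg_ne hcm, mul_neg, neg_neg, ← mul_assoc]
  | algebraMap r =>
    intro y
    exact CliffordAlgebra.contractLeft_algebraMap_mul _ r y
  | add x y hx hy ihx ihy => intro z; rw [add_mul, map_add, ihx, ihy, add_mul]
  | mul x y hx hy ihx ihy => intro z; rw [mul_assoc, ihx, ihy, ← mul_assoc]

lemma dd_one (m : Fin n × Bool) : dd m (1 : Gr n) = 0 := by
  simp [dd]

lemma dd_paired {S : Set (Fin n)} {m : Fin n × Bool} (hm : m.1 ∉ S) {x : Gr n}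
    (hx : x ∈ paired S) : dd m x = 0 := by
  have h := dd_mul_paired hm hx 1
  rw [mul_one, dd_one, mul_zero] at h
  exact h

/-- `ω i = ξ i η i`. -/
def ωg (i : Fin n) : Gr n := gξ i * gη i

lemma ω_mem {S : Set (Fin n)} {i : Fin n} (hi : i ∈ S) : ωg i ∈ paired S :=
  pair_mem (a := (i, false)) (c := (i, true)) hi hi

lemma one_add_ω_mem {S : Set (Fin n)} {i : Fin n} (hi : i ∈ S) : 1 + ωg i ∈ paired S :=
  add_mem (one_mem _) (ω_mem hi)

lemma udot_add_one (i j : Fin n) :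
    udot i j + 1 = ωg i + ωg j - ωg i * ωg j - gξ i * gη j - gξ j * gη i := by
  simp only [udot, gz, ωg]
  noncomm_ring

lemma fac_mem {S : Set (Fin n)} {i j : Fin n} (hi : i ∈ S) (hj : j ∈ S) :
    udot i j + 1 ∈ paired S := by
  rw [udot_add_one]
  exact sub_mem (sub_mem (sub_mem (add_mem (ω_mem hi) (ω_mem hj))
    (mul_mem (ω_mem hi) (ω_mem hj))) (pair_mem (a := (i, false)) (c := (j, true)) hi hj))
    (pair_mem (a := (j, false)) (c := (i, true)) hj hi)

lemma udot_symm (i j : Fin n) : udot i j = udot j i := by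
  have h : ωg i * ωg j = ωg j * ωg i :=
    comm_paired (ω_mem (Set.mem_univ i)) (ω_mem (S := (Set.univ : Set (Fin n))) (Set.mem_univ j))
  have h2 : udot i j + 1 = udot j i + 1 := by
    rw [udot_add_one, udot_add_one, h]
    abel
  exact add_right_cancel h2

lemma bg_bg_cancel (x : Fin n × Bool) (w : Gr n) : bg x * (bg x * w) = 0 := by
  rw [← mul_assoc, bg_sq, zero_mul]

lemma z1 (x y z : Fin n × Bool) : bg x * bg y * (bg x * bg z) = 0 := by
  rw [bg_swap x y]
  simp only [neg_mul, mul_assoc]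
  rw [bg_bg_cancel, mul_zero, neg_zero]

lemma z2 (x y z : Fin n × Bool) : bg x * bg y * (bg z * bg y) = 0 := by
  have h : bg y * (bg z * bg y) = 0 := by
    rw [← mul_assoc, bg_swap y z, neg_mul, mul_assoc, bg_sq, mul_zero, neg_zero]
  rw [mul_assoc, h, mul_zero]

lemma key_id (a i : Fin n) :
    (1 + ωg a) * (udot i a + 1) = ωg a + ωg i - gξ i * gη a - gξ a * gη i := by
  rw [udot_add_one]
  have h1 : ωg a * ωg a = 0 := z1 (a, false) (a, true) (a, true)
  have h2 : ωg a * (gξ i * gη a) = 0 := z2 (a, false) (a, true) (i, false)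
  have h3 : ωg a * (gξ a * gη i) = 0 := z1 (a, false) (a, true) (i, true)
  have h4 : ωg a * ωg i = ωg i * ωg a :=
    comm_paired (ω_mem (Set.mem_univ a)) (ω_mem (S := (Set.univ : Set (Fin n))) (Set.mem_univ i))
  have h5 : ωg a * (ωg i * ωg a) = 0 := by rw [← mul_assoc, h4, mul_assoc, h1, mul_zero]
  rw [one_add_mul]
  simp only [mul_sub, mul_add]
  rw [h1, h2, h3, h5, h4]
  abel

lemma pairD_apply (a : Fin n) (x : Gr n) : pairD a x = dd (a, true) (dd (a, false) x) := rfl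

lemma dd_eta_kill {S : Set (Fin n)} {a : Fin n} (ha : a ∉ S) {Y : Gr n} (hY : Y ∈ paired S)
    (j : Fin n) : dd (a, false) (bg (j, true) * Y) = 0 := by
  rw [dd_bg_ne (by simp) _, dd_paired ha hY, mul_zero, neg_zero]

lemma pairD_one_omega {S : Set (Fin n)} {a : Fin n} (ha : a ∉ S) {Y : Gr n}
    (hY : Y ∈ paired S) : pairD a ((1 + ωg a) * Y) = Y := by
  have hdf : dd (a, false) Y = 0 := dd_paired ha hY
  have hdt : dd (a, true) Y = 0 := dd_paired ha hY
  have hωY : ωg a * Y = bg (a, false) * (bg (a, true) * Y) := mul_assoc _ _ _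
  have step1 : dd (a, false) ((1 + ωg a) * Y) = bg (a, true) * Y := by
    rw [one_add_mul, map_add, hdf, hωY, dd_bg_same, dd_eta_kill ha hY, mul_zero, sub_zero,
      zero_add]
  rw [pairD_apply, step1, dd_bg_same, hdt, mul_zero, sub_zero]

lemma pairD_edge {S : Set (Fin n)} {a i : Fin n} (ha : a ∉ S) (hi : i ∈ S) {Y : Gr n}
    (hY : Y ∈ paired S) :
    pairD a ((ωg a + ωg i - gξ i * gη a - gξ a * gη i) * Y) = Y := by
  have hia : i ≠ a := fun h => ha (h ▸ hi)
  have hdf : dd (a, false) Y = 0 := dd_paired ha hY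
  have hdt : dd (a, true) Y = 0 := dd_paired ha hY
  have hηY : dd (a, false) (bg (a, true) * Y) = 0 := dd_eta_kill ha hY a
  have hηiY : dd (a, false) (bg (i, true) * Y) = 0 := dd_eta_kill ha hY i
  have e1 : ωg a * Y = bg (a, false) * (bg (a, true) * Y) := mul_assoc _ _ _
  have e2 : (gξ i * gη a) * Y = bg (i, false) * (bg (a, true) * Y) := mul_assoc _ _ _
  have e3 : (gξ a * gη i) * Y = bg (a, false) * (bg (i, true) * Y) := mul_assoc _ _ _
  have step1 : dd (a, false) ((ωg a + ωg i - gξ i * gη a - gξ a * gη i) * Y)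
      = bg (a, true) * Y - bg (i, true) * Y := by
    rw [sub_mul, sub_mul, add_mul, map_sub, map_sub, map_add]
    rw [e1, dd_bg_same, hηY, mul_zero, sub_zero]
    rw [dd_paired ha (mul_mem (ω_mem hi) hY)]
    rw [e2, dd_bg_ne (by simp [hia.symm]) _, hηY, mul_zero, neg_zero]
    rw [e3, dd_bg_same, hηiY, mul_zero, sub_zero, add_zero, sub_zero]
  rw [pairD_apply, step1, map_sub, dd_bg_same, hdt, mul_zero, sub_zero,
    dd_bg_ne (by simp [hia.symm]) _, hdt, mul_zero, neg_zero, sub_zero]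

lemma dd_swap (m m' : Fin n × Bool) (x : Gr n) : dd m (dd m' x) = -(dd m' (dd m x)) :=
  CliffordAlgebra.contractLeft_comm _ _ x

lemma pairD_commute (i j : Fin n) : Commute (pairD (n := n) i) (pairD j) := by
  have h : pairD (n := n) i * pairD j = pairD j * pairD i := by
    refine LinearMap.ext fun x => ?_
    simp only [Module.End.mul_apply, pairD_apply]
    have L : dd (i, true) (dd (i, false) (dd (j, true) (dd (j, false) x)))
        = dd (j, true) (dd (i, true) (dd (i, false) (dd (j, false) x))) := by
      rw [dd_swap (i, false) (j, true) (dd (j, false) x), map_neg,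
        dd_swap (i, true) (j, true) (dd (i, false) (dd (j, false) x)), neg_neg]
    have R : dd (j, true) (dd (j, false) (dd (i, true) (dd (i, false) x)))
        = dd (j, true) (dd (i, true) (dd (i, false) (dd (j, false) x))) := by
      rw [dd_swap (j, false) (i, true) (dd (i, false) x), map_neg,
        dd_swap (j, false) (i, false) x, map_neg, map_neg, neg_neg]
    exact L.trans R.symm
  exact h

lemma pairwise_commute_gr {l : List (Gr n)}
    (h : ∀ x ∈ l, x ∈ paired (Set.univ : Set (Fin n))) : l.Pairwise Commute :=
  List.pairwise_of_forall_mem_list fun x hx y hy => comm_paired (h x hx) (h y hy)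

lemma pairD_pairwise (l : List (Fin n)) : (l.map pairD).Pairwise Commute := by
  refine List.pairwise_of_forall_mem_list ?_
  rintro x hx y hy
  obtain ⟨i, -, rfl⟩ := List.mem_map.1 hx
  obtain ⟨j, -, rfl⟩ := List.mem_map.1 hy
  exact pairD_commute i j

lemma peel (l : List (Fin n)) (hnd : l.Nodup) :
    ∀ Y ∈ paired {i : Fin n | i ∉ l},
      ((l.map pairD).prod) ((l.map fun i => 1 + ωg i).prod * Y) = Y := by
  induction l with
  | nil => intro Y _; simp
  | cons a l ih =>
    intro Y hY
    obtain ⟨hal, hnd'⟩ : a ∉ l ∧ l.Nodup := by simpa [List.nodup_cons] using hnd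
    have hops : ((a :: l).map pairD).prod = (l.map pairD).prod * pairD a := by
      have hp : List.Perm ((a :: l).map pairD) ((l.map pairD) ++ [pairD a]) := by
        simpa using (List.perm_append_singleton (pairD a) (l.map pairD)).symm
      rw [List.Perm.prod_eq' hp (pairD_pairwise (a :: l)), List.prod_append, List.prod_cons,
        List.prod_nil, mul_one]
    have hY₁ : (l.map fun i => 1 + ωg i).prod ∈ paired {i : Fin n | i ≠ a} := by
      refine Subalgebra.list_prod_mem _ ?_
      rintro x hx
      obtain ⟨j, hj, rfl⟩ := List.mem_map.1 hx
      exact one_add_ω_mem (show j ≠ a from fun h => hal (h ▸ hj))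
    have hsub1 : {i : Fin n | i ∉ a :: l} ⊆ {i : Fin n | i ≠ a} := by
      intro x hx
      simp only [Set.mem_setOf_eq, List.mem_cons, not_or] at hx ⊢
      exact hx.1
    have hsub2 : {i : Fin n | i ∉ a :: l} ⊆ {i : Fin n | i ∉ l} := by
      intro x hx
      simp only [Set.mem_setOf_eq, List.mem_cons, not_or] at hx ⊢
      exact hx.2
    have hY₂ : Y ∈ paired {i : Fin n | i ≠ a} := paired_mono hsub1 hY
    have hprod : ((a :: l).map fun i => 1 + ωg i).prod * Y
        = (1 + ωg a) * ((l.map fun i => 1 + ωg i).prod * Y) := by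
      rw [List.map_cons, List.prod_cons, mul_assoc]
    rw [hops, Module.End.mul_apply, hprod,
      pairD_one_omega (show a ∉ {i : Fin n | i ≠ a} by simp) (mul_mem hY₁ hY₂)]
    exact ih hnd' Y (paired_mono hsub2 hY)

lemma exists_leaf {F : Finset (Fin n × Fin n)} (hF : ForestRep F) (hne : F.Nonempty) :
    ∃ (a : Fin n) (e : Fin n × Fin n), e ∈ F ∧ (e.1 = a ∨ e.2 = a) ∧
      ∀ p ∈ F, p ≠ e → p.1 ≠ a ∧ p.2 ≠ a := by
  classical
  set G := SimpleGraph.fromRel (fun i j : Fin n => (i, j) ∈ F) with hG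
  have hadjF : ∀ {x y : Fin n}, G.Adj x y ↔ x ≠ y ∧ ((x, y) ∈ F ∨ (y, x) ∈ F) := by
    intro x y
    rw [hG, SimpleGraph.fromRel_adj]
  obtain ⟨e0, he0⟩ := hne
  have hadj0 : G.Adj e0.1 e0.2 :=
    hadjF.2 ⟨(hF.1 e0 he0).ne, Or.inl (by simpa using he0)⟩
  let P : ℕ → Prop := fun k => ∃ (u v : Fin n) (p : G.Walk u v), p.IsPath ∧ p.length = k
  have hP1 : P 1 :=
    ⟨e0.1, e0.2, (SimpleGraph.Path.singleton hadj0).1, (SimpleGraph.Path.singleton hadj0).2,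
      by simp [SimpleGraph.Path.singleton]⟩
  have hbd : ∀ k, P k → k ≤ n := by
    rintro k ⟨u, v, p, hp, hl⟩
    have h := hp.length_lt
    rw [hl, Fintype.card_fin] at h
    omega
  set K := Nat.findGreatest P n with hK
  have hK1 : 1 ≤ K := Nat.le_findGreatest (hbd 1 hP1) hP1
  have hPK : P K := Nat.findGreatest_of_ne_zero hK.symm (by omega)
  have hmax : ¬ P (K + 1) := by
    intro hPK1
    have h2 := Nat.le_findGreatest (hbd _ hPK1) hPK1
    omega
  obtain ⟨u, v, p, hp, hl⟩ := hPK
  have hlen : 0 < p.length := by omega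
  set x := p.getVert 1 with hx
  have hadj1 : G.Adj u x := by
    have h0 := p.adj_getVert_succ (i := 0) hlen
    rw [SimpleGraph.Walk.getVert_zero] at h0
    exact h0
  have hnbr : ∀ w, G.Adj u w → w = x := by
    intro w hw
    have hws : w ∈ p.support := by
      by_contra hns
      exact hmax ⟨w, v, SimpleGraph.Walk.cons hw.symm p,
        (SimpleGraph.Walk.cons_isPath_iff _ _).2 ⟨hp, hns⟩, by simp [hl]⟩
    have hr : (p.takeUntil w hws).IsPath := hp.takeUntil hws
    have hsing : p.takeUntil w hws = (SimpleGraph.Path.singleton hw).1 :=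
      congrArg Subtype.val (hF.2.path_unique ⟨_, hr⟩ (SimpleGraph.Path.singleton hw))
    have hgv : p.getVert 1 = w := by
      conv_lhs => rw [← p.take_spec hws]
      rw [hsing]
      simp [SimpleGraph.Path.singleton, SimpleGraph.Walk.cons_append,
        SimpleGraph.Walk.getVert_cons_succ, SimpleGraph.Walk.getVert_zero]
    exact (hx.trans hgv).symm
  have hux : u ≠ x := hadj1.ne
  rcases (hadjF.1 hadj1).2 with hmem | hmem
  · refine ⟨u, (u, x), hmem, Or.inl rfl, ?_⟩
    rintro p' hp' hneq
    constructor
    · intro h1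
      have hpx : p'.2 = x := by
        refine hnbr p'.2 (hadjF.2 ⟨?_, Or.inl ?_⟩)
        · rw [← h1]; exact (hF.1 p' hp').ne
        · rw [← h1]; simpa using hp'
      exact absurd (Prod.ext h1 hpx) hneq
    · intro h2
      have hpx : p'.1 = x := by
        refine hnbr p'.1 (hadjF.2 ⟨?_, Or.inr ?_⟩)
        · rw [← h2]; exact (hF.1 p' hp').ne.symm
        · rw [← h2]; simpa using hp'
      have : (x, u) ∈ F := by rw [← hpx, ← h2]; simpa using hp'
      exact absurd ((hF.1 _ hmem).trans (hF.1 _ this)) (lt_irrefl _)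
  · refine ⟨u, (x, u), hmem, Or.inr rfl, ?_⟩
    rintro p' hp' hneq
    constructor
    · intro h1
      have hpx : p'.2 = x := by
        refine hnbr p'.2 (hadjF.2 ⟨?_, Or.inl ?_⟩)
        · rw [← h1]; exact (hF.1 p' hp').ne
        · rw [← h1]; simpa using hp'
      have : (u, x) ∈ F := by rw [← hpx, ← h1]; simpa using hp'
      exact absurd ((hF.1 _ hmem).trans (hF.1 _ this)) (lt_irrefl _)
    · intro h2
      have hpx : p'.1 = x := by
        refine hnbr p'.1 (hadjF.2 ⟨?_, Or.inr ?_⟩)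
        · rw [← h2]; exact (hF.1 p' hp').ne.symm
        · rw [← h2]; simpa using hp'
      exact absurd (Prod.ext hpx h2) hneq

lemma master (F : Finset (Fin n × Fin n)) (hF : ForestRep F) :
    fullD ((List.ofFn fun i : Fin n => 1 + ωg i).prod * (F.toList.map
      (fun p => udot p.1 p.2 + 1)).prod) = 1 := by
  classical
  induction F using Finset.strongInduction with
  | _ F ih =>
  rcases F.eq_empty_or_nonempty with rfl | hne
  · simp only [Finset.toList_empty, List.map_nil, List.prod_nil, mul_one]
    have h := peel (List.finRange n) (List.nodup_finRange n) 1 (one_mem _)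
    rw [mul_one] at h
    rw [fullD, List.ofFn_eq_map, List.ofFn_eq_map]
    exact h
  · obtain ⟨a, e, he, hea, huniq⟩ := exists_leaf hF hne
    -- the other endpoint
    obtain ⟨i, hia, hfe⟩ : ∃ i : Fin n, i ≠ a ∧ udot e.1 e.2 + 1 = udot i a + 1 := by
      rcases hea with h1 | h2
      · refine ⟨e.2, ?_, ?_⟩
        · rw [← h1]; exact ((hF.1 e he).ne).symm
        · rw [h1, udot_symm]
      · exact ⟨e.1, by rw [← h2]; exact (hF.1 e he).ne, by rw [h2]⟩
    set F' := F.erase e with hF'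
    have hF'rep : ForestRep F' := by
      constructor
      · exact fun p hp => hF.1 p (Finset.mem_of_mem_erase hp)
      · have hle : SimpleGraph.fromRel (fun i j : Fin n => (i, j) ∈ F')
            ≤ SimpleGraph.fromRel (fun i j : Fin n => (i, j) ∈ F) := by
          intro x y hxy
          rw [SimpleGraph.fromRel_adj] at hxy ⊢
          exact ⟨hxy.1, hxy.2.imp Finset.mem_of_mem_erase Finset.mem_of_mem_erase⟩
        exact fun v c hc => hF.2 (c.mapLe hle) (hc.mapLe hle)
    set Zr := (((List.finRange n).erase a).map fun j => 1 + ωg j).prod with hZr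
    set PF' := (F'.toList.map (fun p => udot p.1 p.2 + 1)).prod with hPF'def
    set Y := Zr * PF' with hYdef
    have hZrmem : Zr ∈ paired {x : Fin n | x ≠ a} := by
      refine Subalgebra.list_prod_mem _ ?_
      rintro x hx
      obtain ⟨j, hj, rfl⟩ := List.mem_map.1 hx
      have : j ≠ a := ((List.Nodup.mem_erase_iff (List.nodup_finRange n)).1 hj).1
      exact one_add_ω_mem this
    have hPF'mem : PF' ∈ paired {x : Fin n | x ≠ a} := by
      refine Subalgebra.list_prod_mem _ ?_
      rintro x hx
      obtain ⟨p, hp, rfl⟩ := List.mem_map.1 hx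
      rw [Finset.mem_toList, hF', Finset.mem_erase] at hp
      obtain ⟨h1, h2⟩ := huniq p hp.2 hp.1
      exact fac_mem h1 h2
    have hY : Y ∈ paired {x : Fin n | x ≠ a} := mul_mem hZrmem hPF'mem
    have hallU : ∀ x : Gr n, x ∈ paired {y : Fin n | y ≠ a} →
        x ∈ paired (Set.univ : Set (Fin n)) := fun x hx =>
      paired_mono (Set.subset_univ _) hx
    have hZ : (List.ofFn fun j : Fin n => 1 + ωg j).prod = (1 + ωg a) * Zr := by
      rw [List.ofFn_eq_map]
      have hperm : List.Perm ((List.finRange n).map (fun j => 1 + ωg j))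
          ((a :: (List.finRange n).erase a).map (fun j => 1 + ωg j)) :=
        (List.perm_cons_erase (List.mem_finRange a)).map _
      have hpw : ((List.finRange n).map (fun j => 1 + ωg j)).Pairwise Commute := by
        refine pairwise_commute_gr ?_
        rintro x hx
        obtain ⟨j, -, rfl⟩ := List.mem_map.1 hx
        exact one_add_ω_mem (Set.mem_univ j)
      rw [List.Perm.prod_eq' hperm hpw, List.map_cons, List.prod_cons]
    have hPF : (F.toList.map (fun p => udot p.1 p.2 + 1)).prod
        = (udot e.1 e.2 + 1) * PF' := by
      have h1 : List.Perm F.toList (e :: F'.toList) := by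
        have h0 := Finset.toList_insert (Finset.notMem_erase e F)
        rw [Finset.insert_erase he] at h0
        exact h0
      have hpw : (F.toList.map (fun p => udot p.1 p.2 + 1)).Pairwise Commute := by
        refine pairwise_commute_gr ?_
        rintro x hx
        obtain ⟨p, -, rfl⟩ := List.mem_map.1 hx
        exact fac_mem (Set.mem_univ _) (Set.mem_univ _)
      rw [List.Perm.prod_eq' (h1.map _) hpw, List.map_cons, List.prod_cons]
    have hcomm : Zr * (udot e.1 e.2 + 1) = (udot e.1 e.2 + 1) * Zr :=
      comm_paired (hallU _ hZrmem) (fac_mem (Set.mem_univ e.1) (Set.mem_univ e.2))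
    have hOPS : ∀ w : Gr n,
        fullD w = ((((List.finRange n).erase a).map pairD).prod) (pairD a w) := by
      intro w
      have hperm : List.Perm ((List.finRange n).map pairD)
          ((((List.finRange n).erase a).map pairD) ++ [pairD a]) := by
        refine ((List.perm_cons_erase (List.mem_finRange a)).map pairD).trans ?_
        rw [List.map_cons]
        exact (List.perm_append_singleton _ _).symm
      rw [fullD, List.ofFn_eq_map, List.Perm.prod_eq' hperm (pairD_pairwise _),
        List.prod_append, List.prod_cons, List.prod_nil, mul_one, Module.End.mul_apply]
    have key1 : pairD a ((List.ofFn fun j : Fin n => 1 + ωg j).prod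
        * (F.toList.map (fun p => udot p.1 p.2 + 1)).prod) = Y := by
      rw [hZ, hPF]
      have hassoc : (1 + ωg a) * Zr * ((udot e.1 e.2 + 1) * PF')
          = ((1 + ωg a) * (udot e.1 e.2 + 1)) * Y := by
        rw [mul_assoc (1 + ωg a) Zr, ← mul_assoc Zr, hcomm, hYdef]
        noncomm_ring
      rw [hassoc, hfe, key_id a i]
      exact pairD_edge (show a ∉ {x : Fin n | x ≠ a} by simp) (show i ∈ {x : Fin n | x ≠ a}
        from hia) hY
    have key2 : pairD a ((List.ofFn fun j : Fin n => 1 + ωg j).prod * PF') = Y := by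
      rw [hZ, mul_assoc]
      exact pairD_one_omega (show a ∉ {x : Fin n | x ≠ a} by simp) hY
    have hstep : fullD ((List.ofFn fun j : Fin n => 1 + ωg j).prod
          * (F.toList.map (fun p => udot p.1 p.2 + 1)).prod)
        = fullD ((List.ofFn fun j : Fin n => 1 + ωg j).prod * PF') := by
      rw [hOPS, hOPS, key1, key2]
    rw [hstep, hPF'def]
    exact ih F' (Finset.erase_ssubset he) hF'rep

end ForestProof



/-- For any forest `F` on the finite vertex set `Fin n`, the hyperbolic
fermionic integral of `∏_{ij ∈ F} (uᵢ·uⱼ + 1)` equals `1`. -/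
theorem forest_integral_eq_one (n : ℕ) (F : Finset (Fin n × Fin n)) (hF : ForestRep F) :
    sint ((F.toList.map (fun p => udot p.1 p.2 + 1)).prod) = 1 := by
  have h := ForestProof.master F hF
  rw [sint, bint]
  rw [show (List.ofFn fun i : Fin n => (1 : Gr n) + gξ i * gη i)
      = (List.ofFn fun i : Fin n => 1 + ForestProof.ωg i) from rfl]
  rw [show (F.toList.map fun p => udot p.1 p.2 + 1)
      = (F.toList.map fun p => udot p.1 p.2 + 1) from rfl]
  rw [h]
  exact map_one _
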